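/- Let H be a Hilbert space and Λ₁, Λ₂ bounded self-adjoint nonnegative operators between H' := dual identified via Riesz map J : H → H', with Λ₁ : H' → H and Λ₂ : H → H' self-adjoint and nonnegative (i.e. ⟨ψ, Λ₁ψ⟩ ≥ 0 for ψ ∈ H' and ⟨Λ₂φ, φ⟩ ≥ 0 for φ ∈ H). Then A := Λ₁J and B := J⁻¹Λ₂ are bounded self-adjoint nonnegative operators on H, and T₁₂ := I + Λ₁Λ₂ = I + AB is a homeomorphism of H onto itself. -/

import Mathlib

open RealInnerProductSpace

-- Cauchy–Schwarz for the semi-inner product induced by a symmetric nonneg operator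
lemma myCS {H : Type*} [NormedAddCommGroup H] [InnerProductSpace ℝ H]
    (S : H →L[ℝ] H) (hsym : ∀ x y : H, ⟪S x, y⟫ = ⟪x, S y⟫)
    (hpos : ∀ x : H, 0 ≤ ⟪S x, x⟫) (x y : H) :
    ⟪S x, y⟫ ^ 2 ≤ ⟪S x, x⟫ * ⟪S y, y⟫ := by
  have key : ∀ t : ℝ, 0 ≤ ⟪S y, y⟫ * (t * t) + (2 * ⟪S x, y⟫) * t + ⟪S x, x⟫ := by
    intro t
    have h := hpos (x + t • y)
    have hyx : ⟪S y, x⟫ = ⟪S x, y⟫ := by rw [hsym y x, real_inner_comm]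
    simp only [map_add, map_smul, inner_add_left, inner_add_right, real_inner_smul_left,
      real_inner_smul_right] at h
    rw [hyx] at h
    nlinarith [h]
  have hd := discrim_le_zero key
  rw [discrim] at hd
  nlinarith [hd]

-- ‖Sv‖² ≤ ‖S‖ ⟪Sv, v⟫
lemma myNormSq {H : Type*} [NormedAddCommGroup H] [InnerProductSpace ℝ H]
    (S : H →L[ℝ] H) (hsym : ∀ x y : H, ⟪S x, y⟫ = ⟪x, S y⟫)
    (hpos : ∀ x : H, 0 ≤ ⟪S x, x⟫) (v : H) :
    ‖S v‖ ^ 2 ≤ ‖S‖ * ⟪S v, v⟫ := by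
  have h1 := myCS S hsym hpos v (S v)
  have h2 : ⟪S (S v), S v⟫ ≤ ‖S‖ * ‖S v‖ * ‖S v‖ := by
    calc ⟪S (S v), S v⟫ ≤ ‖S (S v)‖ * ‖S v‖ := real_inner_le_norm _ _
    _ ≤ ‖S‖ * ‖S v‖ * ‖S v‖ := by
        have := S.le_opNorm (S v)
        nlinarith [norm_nonneg (S v)]
  have h3 : ⟪S v, S v⟫ = ‖S v‖ ^ 2 := real_inner_self_eq_norm_sq _
  rcases eq_or_lt_of_le (norm_nonneg (S v)) with h | h
  · have : ‖S v‖ ^ 2 = 0 := by rw [← h]; ring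
    rw [this]
    exact mul_nonneg (norm_nonneg S) (hpos v)
  · rw [h3] at h1
    nlinarith [hpos v, norm_nonneg S,
      mul_le_mul_of_nonneg_left h2 (hpos v), mul_pos h h]

-- the key antilipschitz bound
lemma myBound {H : Type*} [NormedAddCommGroup H] [InnerProductSpace ℝ H]
    (A B : H →L[ℝ] H)
    (hAsym : ∀ x y : H, ⟪A x, y⟫ = ⟪x, A y⟫)
    (hApos : ∀ x : H, 0 ≤ ⟪A x, x⟫)
    (hBpos : ∀ x : H, 0 ≤ ⟪B x, x⟫) (u : H) :
    ‖u‖ ≤ (2 + ‖A‖ * ‖B‖) * ‖u + A (B u)‖ := by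
  set f := u + A (B u) with hf
  set v := B u with hv
  have h1 : 0 ≤ ⟪A v, v⟫ := hApos v
  have hpair : ⟪f, v⟫ = ⟪u, v⟫ + ⟪A v, v⟫ := by rw [hf]; simp [inner_add_left]
  have huv : 0 ≤ ⟪u, v⟫ := by rw [real_inner_comm]; exact hBpos u
  have h2 : ⟪A v, v⟫ ≤ ‖f‖ * (‖B‖ * ‖u‖) := by
    have hfv : ⟪f, v⟫ ≤ ‖f‖ * ‖v‖ := real_inner_le_norm _ _
    have hbv : ‖v‖ ≤ ‖B‖ * ‖u‖ := B.le_opNorm u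
    nlinarith [norm_nonneg f]
  have h3 : ‖A v‖ ^ 2 ≤ ‖A‖ * ⟪A v, v⟫ := myNormSq A hAsym hApos v
  have h4 : ‖u‖ ≤ ‖f‖ + ‖A v‖ := by
    have : u = f - A v := by rw [hf]; abel
    rw [this]
    exact norm_sub_le _ _
  have h5 : ‖A v‖ ^ 2 ≤ ‖A‖ * ‖B‖ * ‖f‖ * ‖u‖ := by nlinarith [norm_nonneg A]
  by_contra hcon
  push_neg at hcon
  have hk : 0 ≤ ‖A‖ * ‖B‖ := mul_nonneg (norm_nonneg A) (norm_nonneg B)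
  have hkc : 0 ≤ ‖A‖ * ‖B‖ * ‖f‖ := mul_nonneg hk (norm_nonneg f)
  have hx : 0 < ‖u‖ := lt_of_le_of_lt (by positivity) hcon
  have h6 : (‖u‖ - ‖f‖) ^ 2 ≤ ‖A v‖ ^ 2 := by
    have h0 : 0 ≤ ‖u‖ - ‖f‖ := by nlinarith [norm_nonneg f]
    have h0' : ‖u‖ - ‖f‖ ≤ ‖A v‖ := by linarith
    exact pow_le_pow_left₀ h0 h0' 2
  have h7 : ‖u‖ * ((2 + ‖A‖ * ‖B‖) * ‖f‖) < ‖u‖ * ‖u‖ :=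
    mul_lt_mul_of_pos_left hcon hx
  nlinarith [h5, h6, h7, sq_nonneg ‖f‖]

theorem T12_homeomorphism_via_riesz
    {H H' : Type*} [NormedAddCommGroup H] [InnerProductSpace ℝ H] [CompleteSpace H]
    [NormedAddCommGroup H'] [InnerProductSpace ℝ H'] [CompleteSpace H']
    -- J is the Riesz duality isomorphism; the duality pairing is ⟨ψ, φ⟩ = (J⁻¹ψ | φ)
    (J : H ≃ₗᵢ[ℝ] H')
    (Λ₁ : H' →L[ℝ] H) (Λ₂ : H →L[ℝ] H')
    (hΛ₁sa : ∀ ψ₁ ψ₂ : H', (inner ℝ (J.symm ψ₁) (Λ₁ ψ₂) : ℝ) = inner ℝ (J.symm ψ₂) (Λ₁ ψ₁))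
    (hΛ₁pos : ∀ ψ : H', 0 ≤ (inner ℝ (J.symm ψ) (Λ₁ ψ) : ℝ))
    (hΛ₂sa : ∀ φ₁ φ₂ : H, (inner ℝ (J.symm (Λ₂ φ₁)) φ₂ : ℝ) = inner ℝ (J.symm (Λ₂ φ₂)) φ₁)
    (hΛ₂pos : ∀ φ : H, 0 ≤ (inner ℝ (J.symm (Λ₂ φ)) φ : ℝ))
    (A B : H →L[ℝ] H)
    (hAdef : A = Λ₁ ∘L (J.toContinuousLinearEquiv : H →L[ℝ] H'))
    (hBdef : B = (J.symm.toContinuousLinearEquiv : H' →L[ℝ] H) ∘L Λ₂) :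
    IsSelfAdjoint A ∧ (∀ u : H, 0 ≤ (inner ℝ (A u) u : ℝ)) ∧
    IsSelfAdjoint B ∧ (∀ u : H, 0 ≤ (inner ℝ (B u) u : ℝ)) ∧
    (∀ φ : H, (A ∘L B) φ = Λ₁ (Λ₂ φ)) ∧
    ∃ e : H ≃L[ℝ] H, (e : H →L[ℝ] H) = 1 + A ∘L B := by
  have hAapp : ∀ x : H, A x = Λ₁ (J x) := by
    intro x; rw [hAdef]; simp
  have hBapp : ∀ x : H, B x = J.symm (Λ₂ x) := by
    intro x; rw [hBdef]; simp
  have hA' : ∀ x y : H, ⟪A x, y⟫ = ⟪x, A y⟫ := by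
    intro x y
    have h := hΛ₁sa (J y) (J x)
    simp only [LinearIsometryEquiv.symm_apply_apply] at h
    rw [hAapp, hAapp, real_inner_comm, h]
  have hApos' : ∀ x : H, 0 ≤ ⟪A x, x⟫ := by
    intro x
    have h := hΛ₁pos (J x)
    simp only [LinearIsometryEquiv.symm_apply_apply] at h
    rw [hAapp, real_inner_comm]; exact h
  have hB' : ∀ x y : H, ⟪B x, y⟫ = ⟪x, B y⟫ := by
    intro x y
    rw [hBapp, hBapp, hΛ₂sa x y, real_inner_comm]
  have hBpos' : ∀ x : H, 0 ≤ ⟪B x, x⟫ := by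
    intro x; rw [hBapp]; exact hΛ₂pos x
  have hAsa : IsSelfAdjoint A :=
    ContinuousLinearMap.isSelfAdjoint_iff_isSymmetric.2 hA'
  have hBsa : IsSelfAdjoint B :=
    ContinuousLinearMap.isSelfAdjoint_iff_isSymmetric.2 hB'
  have hprod : ∀ φ : H, (A ∘L B) φ = Λ₁ (Λ₂ φ) := by
    intro φ
    simp [ContinuousLinearMap.comp_apply, hAapp, hBapp]
  refine ⟨hAsa, hApos', hBsa, hBpos', hprod, ?_⟩
  set T : H →L[ℝ] H := 1 + A ∘L B with hT
  set T' : H →L[ℝ] H := 1 + B ∘L A with hT'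
  have hTapp : ∀ u, T u = u + A (B u) := by intro u; simp [hT]
  have hT'app : ∀ u, T' u = u + B (A u) := by intro u; simp [hT']
  have hb1 : ∀ u, ‖u‖ ≤ (2 + ‖A‖ * ‖B‖) * ‖T u‖ := by
    intro u; rw [hTapp]; exact myBound A B hA' hApos' hBpos' u
  have hb2 : ∀ u, ‖u‖ ≤ (2 + ‖B‖ * ‖A‖) * ‖T' u‖ := by
    intro u; rw [hT'app]; exact myBound B A hB' hBpos' hApos' u
  have hpair : ∀ u v : H, ⟪T u, v⟫ = ⟪u, T' v⟫ := by
    intro u v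
    rw [hTapp, hT'app, inner_add_left, inner_add_right]
    rw [hA' (B u) v, hB' u (A v)]
  -- injectivity
  have hinj : Function.Injective T := by
    intro x y hxy
    have h1 : T (x - y) = 0 := by rw [map_sub, hxy, sub_self]
    have h2 := hb1 (x - y)
    rw [h1, norm_zero, mul_zero] at h2
    have : x - y = 0 := norm_le_zero_iff.1 h2
    exact sub_eq_zero.1 this
  have hker : LinearMap.ker (T : H →ₗ[ℝ] H) = ⊥ := (LinearMap.ker_eq_bot (f := (T : H →ₗ[ℝ] H))).2 hinj
  -- closed range
  have hC : (0:ℝ) ≤ 2 + ‖A‖ * ‖B‖ := by positivity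
  have hanti : AntilipschitzWith (Real.toNNReal (2 + ‖A‖ * ‖B‖)) T := by
    apply T.antilipschitz_of_bound
    intro x
    rw [Real.coe_toNNReal _ hC]
    exact hb1 x
  have hclosed : IsClosed ((LinearMap.range (T : H →ₗ[ℝ] H) : Submodule ℝ H) : Set H) := by
    have := hanti.isClosed_range T.uniformContinuous
    simpa [LinearMap.coe_range] using this
  -- trivial orthogonal complement
  have horth : (LinearMap.range (T : H →ₗ[ℝ] H))ᗮ = ⊥ := by
    rw [Submodule.eq_bot_iff]
    intro v hv
    have h0 : ∀ u : H, ⟪u, T' v⟫ = 0 := by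
      intro u
      rw [← hpair]
      exact hv (T u) (LinearMap.mem_range_self _ u)
    have hTv : T' v = 0 := by
      have := h0 (T' v)
      rwa [inner_self_eq_zero] at this
    have h2 := hb2 v
    rw [hTv, norm_zero, mul_zero] at h2
    exact norm_le_zero_iff.1 h2
  have hrange : LinearMap.range (T : H →ₗ[ℝ] H) = ⊤ := by
    rw [← IsClosed.submodule_topologicalClosure_eq hclosed]
    exact Submodule.topologicalClosure_eq_top_iff.2 horth
  exact ⟨ContinuousLinearEquiv.ofBijective T hker hrange,
    ContinuousLinearEquiv.coe_ofBijective T hker hrange⟩
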